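/- Any algorithm on the ball $\mathcal{B}_\rho$ achieving error at most $\varepsilon$ for all inputs must use at least $\min\{n : \lambda_{n+1} \le \varepsilon/\rho\}$ linear functional evaluations when applied to the zero function. Specifically, if $A$ uses $N$ linear functionals on input $0$ and satisfies $\|S(f) - A(f)\| \le \varepsilon$ for all $\|f\| \le \rho$, then $\lambda_{N+1} \le \varepsilon/\rho$. -/
import Mathlib

open scoped RealInnerProductSpace

/-- If an algorithm `A` on the ball `B_ρ` uses only the values of `N` linear
functionals (so its output agrees on inputs whose functional values agree with those of `0`)
and achieves error at most `ε` on all of `B_ρ`, then `λ_{N+1} ≤ ε/ρ`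
(0-based indexing: `lam N` is `λ_{N+1}`). -/
theorem stmt_9 {F G : Type*} [NormedAddCommGroup F] [InnerProductSpace ℝ F] [CompleteSpace F]
    [NormedAddCommGroup G] [InnerProductSpace ℝ G] [CompleteSpace G]
    (u : HilbertBasis ℕ ℝ F) (v : HilbertBasis ℕ ℝ G)
    (lam : ℕ → ℝ) (hpos : ∀ i, 0 < lam i) (hanti : Antitone lam)
    (S : F →L[ℝ] G) (hS : ∀ (f : F) (i : ℕ), ⟪S f, v i⟫ = lam i * ⟪f, u i⟫)
    (ρ ε : ℝ) (hρ : 0 < ρ)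
    (A : F → G) (N : ℕ) (L : Fin N → F →L[ℝ] ℝ)
    (hA : ∀ f : F, (∀ k, L k f = L k 0) → A f = A 0)
    (herr : ∀ f : F, ‖f‖ ≤ ρ → ‖S f - A f‖ ≤ ε) :
    lam N ≤ ε / ρ := by
  classical
  -- orthonormal family of the first N+1 basis vectors
  set w : Fin (N + 1) → F := fun i => u (i : ℕ) with hw_def
  have hw : Orthonormal ℝ w := u.orthonormal.comp _ Fin.val_injective
  -- linear map from coefficients to functional values
  set T : (Fin (N + 1) → ℝ) →ₗ[ℝ] (Fin N → ℝ) :=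
    { toFun := fun c k => L k (∑ i : Fin (N + 1), c i • w i)
      map_add' := by
        intro a b; funext k
        simp [add_smul, Finset.sum_add_distrib]
      map_smul' := by
        intro r a; funext k
        simp only [Pi.smul_apply, smul_eq_mul, mul_smul, ← Finset.smul_sum, map_smul,
          RingHom.id_apply, smul_eq_mul, Pi.smul_def] } with hT_def
  have hker : LinearMap.ker T ≠ ⊥ := by
    apply LinearMap.ker_ne_bot_of_finrank_lt (K := ℝ)
    simp [Module.finrank_pi]
  obtain ⟨c, hcker, hc0⟩ := (Submodule.ne_bot_iff _).mp hker
  set f : F := ∑ i : Fin (N + 1), c i • w i with hf_def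
  have hfc : ∀ i : Fin (N + 1), ⟪f, w i⟫ = c i := by
    intro i
    simpa using hw.inner_left_fintype c i
  have hLf : ∀ k, L k f = 0 := by
    intro k
    have := congrFun (LinearMap.mem_ker.mp hcker) k
    simpa [hT_def, hf_def] using this
  have hfnorm : ‖f‖ ^ 2 = ∑ i : Fin (N + 1), c i ^ 2 := by
    rw [← real_inner_self_eq_norm_sq, hf_def, sum_inner]
    refine Finset.sum_congr rfl fun i _ => ?_
    rw [real_inner_smul_left, real_inner_comm, ← hf_def, hfc, sq]
  have hfne : f ≠ 0 := by
    obtain ⟨j, hj⟩ := Function.ne_iff.mp hc0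
    intro h
    apply hj
    have := hfc j
    rw [h] at this
    simpa using this.symm
  have hfpos : 0 < ‖f‖ := norm_pos_iff.mpr hfne
  set t : ℝ := ρ / ‖f‖ with ht_def
  have htpos : 0 < t := div_pos hρ hfpos
  set g : F := t • f with hg_def
  have hgnorm : ‖g‖ = ρ := by
    rw [hg_def, norm_smul, Real.norm_eq_abs, abs_of_pos htpos, ht_def,
      div_mul_cancel₀ _ (ne_of_gt hfpos)]
  have hLg : ∀ k, L k g = L k 0 := by
    intro k; simp [hg_def, hLf k]
  have hLg' : ∀ k, L k (-g) = L k 0 := by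
    intro k
    have := hLg k
    simp only [map_neg]
    simpa using this
  have hAg : A g = A 0 := hA g hLg
  have hAg' : A (-g) = A 0 := hA (-g) hLg'
  have h1 : ‖S g - A 0‖ ≤ ε := by
    have := herr g (le_of_eq hgnorm)
    rwa [hAg] at this
  have h2 : ‖S (-g) - A 0‖ ≤ ε := by
    have := herr (-g) (by rw [norm_neg]; exact le_of_eq hgnorm)
    rwa [hAg'] at this
  have hSg : ‖S g‖ ≤ ε := by
    have key : (2 : ℝ) * ‖S g‖ ≤ 2 * ε := by
      have : S g - A 0 - (S (-g) - A 0) = (2 : ℝ) • S g := by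
        rw [map_neg]; module
      calc (2 : ℝ) * ‖S g‖ = ‖(2 : ℝ) • S g‖ := by
            rw [norm_smul]; simp
        _ = ‖S g - A 0 - (S (-g) - A 0)‖ := by rw [this]
        _ ≤ ‖S g - A 0‖ + ‖S (-g) - A 0‖ := norm_sub_le _ _
        _ ≤ ε + ε := add_le_add h1 h2
        _ = 2 * ε := by ring
    linarith
  have hε0 : 0 ≤ ε := le_trans (norm_nonneg _) hSg
  -- Bessel inequality
  have hbessel : ∑ i ∈ Finset.range (N + 1), ‖⟪v i, S g⟫‖ ^ 2 ≤ ‖S g‖ ^ 2 :=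
    v.orthonormal.sum_inner_products_le (S g)
  have hgc : ∀ i : Fin (N + 1), ⟪g, u (i : ℕ)⟫ = t * c i := by
    intro i
    rw [hg_def, real_inner_smul_left]
    exact congrArg (t * ·) (hfc i)
  have hterm : ∀ i : Fin (N + 1),
      ‖⟪v (i : ℕ), S g⟫‖ ^ 2 = (lam (i : ℕ))^2 * (t * c i)^2 := by
    intro i
    rw [Real.norm_eq_abs, sq_abs, real_inner_comm, hS, hgc, mul_pow]
  have hlow : (lam N)^2 * ρ^2 ≤ ∑ i ∈ Finset.range (N + 1), ‖⟪v i, S g⟫‖ ^ 2 := by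
    rw [Finset.sum_range fun i => ‖⟪v i, S g⟫‖ ^ 2]
    calc (lam N)^2 * ρ^2
        = ∑ i : Fin (N + 1), (lam N)^2 * (t * c i)^2 := by
          rw [← Finset.mul_sum]
          congr 1
          have : ∑ i : Fin (N + 1), (t * c i)^2 = t^2 * ∑ i : Fin (N + 1), c i ^ 2 := by
            rw [Finset.mul_sum]; exact Finset.sum_congr rfl fun i _ => by ring
          rw [this, ← hfnorm, ht_def, div_pow, div_mul_cancel₀ _ (by positivity)]
      _ ≤ ∑ i : Fin (N + 1), (lam (i : ℕ))^2 * (t * c i)^2 := by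
          refine Finset.sum_le_sum fun i _ => ?_
          have hle : lam N ≤ lam (i : ℕ) := hanti (Nat.le_of_lt_succ i.isLt)
          have := (hpos N).le
          gcongr
      _ = ∑ i : Fin (N + 1), ‖⟪v (i : ℕ), S g⟫‖ ^ 2 :=
          (Finset.sum_congr rfl fun i _ => (hterm i).symm)
  have hsq : (lam N * ρ)^2 ≤ ε^2 := by
    have h3 : ‖S g‖ ^ 2 ≤ ε ^ 2 := pow_le_pow_left₀ (norm_nonneg _) hSg 2
    calc (lam N * ρ)^2 = (lam N)^2 * ρ^2 := by ring
      _ ≤ ‖S g‖ ^ 2 := le_trans hlow hbessel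
      _ ≤ ε ^ 2 := h3
  have hfinal : lam N * ρ ≤ ε := by
    have h1 : 0 ≤ lam N * ρ := mul_nonneg (hpos N).le hρ.le
    exact (pow_le_pow_iff_left₀ h1 hε0 two_ne_zero).mp hsq
  rw [le_div_iff₀ hρ]
  exact hfinal
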